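/- Let A be a symmetric positive definite q×q real matrix and h : ℝ^p × ℝ^q → ℝ^q satisfy ⟨h(z,y), A y⟩ ≤ δ₀ − δ₁ ⟨y, A y⟩ for all z, y, where δ₀, δ₁ > 0. Then for every real k ≥ 1 there exist constants β₀(k), β₁(k) > 0 such that for the function 𝒱_k(y) = ⟨y, A y⟩^k and the operator 𝔏^z[f](y) = Tr(η(z,y) η(z,y)ᵀ D²f(y)) + h(z,y)·∇f(y), with η bounded, one has 𝔏^z[𝒱_k](y) ≤ β₀(k) − β₁(k) 𝒱_k(y) for all z ∈ ℝ^p and y ∈ ℝ^q. -/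

import Mathlib

open Real Matrix

variable {q : ℕ} (A : Matrix (Fin q) (Fin q) ℝ)

noncomputable def Bmap : ((Fin q → ℝ) × (Fin q → ℝ)) → ℝ := fun p => p.1 ⬝ᵥ A.mulVec p.2

lemma hB : IsBoundedBilinearMap ℝ (Bmap A) := by
  constructor
  · intro x₁ x₂ y; simp [Bmap, add_dotProduct]
  · intro c x y; simp [Bmap, smul_dotProduct]
  · intro x y₁ y₂; simp [Bmap, Matrix.mulVec_add, dotProduct_add]
  · intro c x y; simp [Bmap, Matrix.mulVec_smul, dotProduct_smul]
  · refine ⟨(∑ i, ∑ j, |A i j|) + 1, by positivity, fun x y => ?_⟩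
    calc ‖Bmap A (x, y)‖ ≤ ∑ i, ∑ j, ‖x i‖ * (|A i j| * ‖y j‖) := by
          simp only [Bmap, dotProduct, Matrix.mulVec, Real.norm_eq_abs]
          refine (Finset.abs_sum_le_sum_abs _ _).trans ?_
          refine Finset.sum_le_sum fun i _ => ?_
          rw [abs_mul]
          calc |x i| * |∑ j, A i j * y j| ≤ |x i| * ∑ j, |A i j * y j| :=
                mul_le_mul_of_nonneg_left (Finset.abs_sum_le_sum_abs _ _) (abs_nonneg _)
            _ = ∑ j, |x i| * (|A i j| * |y j|) := by
                rw [Finset.mul_sum]; exact Finset.sum_congr rfl fun j _ => by rw [abs_mul]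
      _ ≤ ((∑ i, ∑ j, |A i j|) + 1) * ‖x‖ * ‖y‖ := by
          have hx : ∀ i : Fin q, ‖x i‖ ≤ ‖x‖ := fun i => norm_le_pi_norm x i
          have hy : ∀ j : Fin q, ‖y j‖ ≤ ‖y‖ := fun j => norm_le_pi_norm y j
          calc ∑ i, ∑ j, ‖x i‖ * (|A i j| * ‖y j‖)
              ≤ ∑ i, ∑ j, ‖x‖ * (|A i j| * ‖y‖) := by
                refine Finset.sum_le_sum fun i _ => Finset.sum_le_sum fun j _ => ?_
                exact mul_le_mul (hx i) (mul_le_mul_of_nonneg_left (hy j) (abs_nonneg _))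
                  (by positivity) (norm_nonneg _)
            _ = (∑ i, ∑ j, |A i j|) * ‖x‖ * ‖y‖ := by
                rw [Finset.sum_mul, Finset.sum_mul]
                exact Finset.sum_congr rfl fun i _ => by
                  rw [Finset.sum_mul, Finset.sum_mul]
                  exact Finset.sum_congr rfl fun j _ => by ring
            _ ≤ ((∑ i, ∑ j, |A i j|) + 1) * ‖x‖ * ‖y‖ := by
                have : (0:ℝ) ≤ ‖x‖ * ‖y‖ := by positivity
                nlinarith [this]

noncomputable def QD (y : Fin q → ℝ) : (Fin q → ℝ) →L[ℝ] ℝ :=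
  ((hB A).deriv (y, y)).comp ((ContinuousLinearMap.id ℝ (Fin q → ℝ)).prod
    (ContinuousLinearMap.id ℝ (Fin q → ℝ)))

lemma QD_apply (y v : Fin q → ℝ) : QD A y v = v ⬝ᵥ A.mulVec y + y ⬝ᵥ A.mulVec v := by
  simp [QD, (hB A).deriv_apply, Bmap, add_comm]

lemma hasFDerivAt_Q (y : Fin q → ℝ) :
    HasFDerivAt (fun y' => y' ⬝ᵥ A.mulVec y') (QD A y) y := by
  have h1 : HasFDerivAt (⇑((ContinuousLinearMap.id ℝ (Fin q → ℝ)).prod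
      (ContinuousLinearMap.id ℝ (Fin q → ℝ))))
      ((ContinuousLinearMap.id ℝ (Fin q → ℝ)).prod (ContinuousLinearMap.id ℝ (Fin q → ℝ))) y :=
    ContinuousLinearMap.hasFDerivAt _
  have h2 := HasFDerivAt.comp (x := y)
    (f := fun y' : Fin q → ℝ => (y', y')) (g := Bmap A)
    ((hB A).hasFDerivAt (y, y)) h1
  exact h2

lemma QD_single (hAsymm : A.IsSymm) (y : Fin q → ℝ) (j : Fin q) :
    QD A y (Pi.single j 1) = 2 * A.mulVec y j := by
  rw [QD_apply]
  rw [single_dotProduct, one_mul]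
  have : y ⬝ᵥ A.mulVec (Pi.single j 1) = A.mulVec y j := by
    rw [show A.mulVec (Pi.single j 1) = fun i => A i j * 1 by ext i; simp]
    have : (fun i => A i j * 1) = fun i => Aᵀ j i := by
      funext i; rw [mul_one, Matrix.transpose_apply]
    rw [this]
    have := hAsymm
    rw [Matrix.IsSymm] at this
    conv_rhs => rw [← this]
    simp [Matrix.mulVec, dotProduct, Matrix.transpose_apply, mul_comm]
  rw [this]; ring

lemma hasFDerivAt_V (k : ℝ) (hk : 1 ≤ k) (y : Fin q → ℝ) :
    HasFDerivAt (fun y' => (y' ⬝ᵥ A.mulVec y') ^ k)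
      ((k * (y ⬝ᵥ A.mulVec y) ^ (k - 1)) • QD A y) y :=
  (hasFDerivAt_Q A y).rpow_const (Or.inr hk)

lemma fderiv_V_single (k : ℝ) (hk : 1 ≤ k) (hAsymm : A.IsSymm) (y : Fin q → ℝ) (j : Fin q) :
    fderiv ℝ (fun y' => (y' ⬝ᵥ A.mulVec y') ^ k) y (Pi.single j 1)
      = k * (y ⬝ᵥ A.mulVec y) ^ (k - 1) * (2 * A.mulVec y j) := by
  rw [(hasFDerivAt_V A k hk y).fderiv]
  simp [QD_single A hAsymm]

/-- the linear functional `y' ↦ (A *ᵥ y') j` as a CLM -/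
noncomputable def rowCLM (j : Fin q) : (Fin q → ℝ) →L[ℝ] ℝ :=
  (ContinuousLinearMap.proj j).comp (LinearMap.toContinuousLinearMap (Matrix.mulVecLin A))

lemma rowCLM_apply (j : Fin q) (v : Fin q → ℝ) : rowCLM A j v = A.mulVec v j := rfl

lemma fderiv2_single (k : ℝ) (hk : 1 ≤ k) (hAsymm : A.IsSymm) (y : Fin q → ℝ)
    (hQ : y ⬝ᵥ A.mulVec y ≠ 0) (i j : Fin q) :
    fderiv ℝ (fun y' => fderiv ℝ (fun y'' => (y'' ⬝ᵥ A.mulVec y'') ^ k) y' (Pi.single j 1)) y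
      (Pi.single i 1)
    = k * (y ⬝ᵥ A.mulVec y) ^ (k - 1) * (2 * A j i)
      + (2 * A.mulVec y j) * (k * ((k - 1) * (y ⬝ᵥ A.mulVec y) ^ (k - 2) * (2 * A.mulVec y i))) := by
  have hfun : (fun y' => fderiv ℝ (fun y'' => (y'' ⬝ᵥ A.mulVec y'') ^ k) y' (Pi.single j 1))
      = fun y' => (k * (y' ⬝ᵥ A.mulVec y') ^ (k - 1)) * (2 * A.mulVec y' j) := by
    funext y'
    rw [fderiv_V_single A k hk hAsymm y' j]
  rw [hfun]
  have hu : HasFDerivAt (fun y' => (y' ⬝ᵥ A.mulVec y') ^ (k - 1))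
      (((k - 1) * (y ⬝ᵥ A.mulVec y) ^ (k - 1 - 1)) • QD A y) y :=
    (hasFDerivAt_Q A y).rpow_const (Or.inl hQ)
  have hc : HasFDerivAt (fun y' => k * (y' ⬝ᵥ A.mulVec y') ^ (k - 1))
      (k • (((k - 1) * (y ⬝ᵥ A.mulVec y) ^ (k - 1 - 1)) • QD A y)) y := hu.const_mul k
  have hv0 : HasFDerivAt (fun y' => A.mulVec y' j) (rowCLM A j) y :=
    (rowCLM A j).hasFDerivAt
  have hv : HasFDerivAt (fun y' => 2 * A.mulVec y' j) ((2:ℝ) • rowCLM A j) y :=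
    hv0.const_mul 2
  have hprod : HasFDerivAt (fun y' => (k * (y' ⬝ᵥ A.mulVec y') ^ (k - 1)) * (2 * A.mulVec y' j)) _ y :=
    hc.mul hv
  rw [hprod.fderiv]
  have e1 : A.mulVec (Pi.single i 1) j = A j i := by
    rw [Matrix.mulVec_single]; simp
  simp only [ContinuousLinearMap.add_apply, ContinuousLinearMap.smul_apply,
    QD_single A hAsymm, rowCLM_apply, e1, smul_eq_mul]
  have : k - 1 - 1 = k - 2 := by ring
  rw [this]

lemma Q_smul (c : ℝ) (y : Fin q → ℝ) :
    (c • y) ⬝ᵥ A.mulVec (c • y) = c ^ 2 * (y ⬝ᵥ A.mulVec y) := by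
  rw [smul_dotProduct, Matrix.mulVec_smul, dotProduct_smul]
  simp [smul_eq_mul]; ring

lemma posdef_lower (hApos : A.PosDef) :
    ∃ m > 0, ∀ y : Fin q → ℝ, m * ‖y‖ ^ 2 ≤ y ⬝ᵥ A.mulVec y := by
  have hcont : Continuous fun y : Fin q → ℝ => y ⬝ᵥ A.mulVec y :=
    continuous_iff_continuousAt.2 fun y => (hasFDerivAt_Q A y).continuousAt
  rcases Nat.eq_zero_or_pos q with hq | hq
  · subst hq
    exact ⟨1, one_pos, fun y => by
      have h0 : y = 0 := Subsingleton.elim _ _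
      have h1 : ‖(0 : Fin 0 → ℝ)‖ = 0 := norm_zero
      rw [h0, h1]
      simp⟩
  haveI : Nontrivial (Fin q → ℝ) := by
    refine ⟨Pi.single ⟨0, hq⟩ 1, 0, fun hcon => ?_⟩
    have := congrFun hcon ⟨0, hq⟩
    simp at this
  have hsph : (Metric.sphere (0 : Fin q → ℝ) 1).Nonempty :=
    NormedSpace.sphere_nonempty.mpr zero_le_one
  have hcompact : IsCompact (Metric.sphere (0 : Fin q → ℝ) 1) := isCompact_sphere _ _
  obtain ⟨y₀, hy₀mem, hmin⟩ := hcompact.exists_isMinOn hsph hcont.continuousOn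
  have hy₀ : ‖y₀‖ = 1 := by simpa using hy₀mem
  have hy₀ne : y₀ ≠ 0 := by
    intro hcon; rw [hcon] at hy₀; simp at hy₀
  refine ⟨y₀ ⬝ᵥ A.mulVec y₀, by simpa using hApos.dotProduct_mulVec_pos hy₀ne, fun y => ?_⟩
  rcases eq_or_ne y 0 with rfl | hy
  · simp
  · have hny : (0:ℝ) < ‖y‖ := norm_pos_iff.2 hy
    set u := ‖y‖⁻¹ • y with hu
    have hunorm : ‖u‖ = 1 := by
      rw [hu, norm_smul]; simp [abs_of_pos hny, inv_mul_cancel₀ hny.ne']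
    have humem : u ∈ Metric.sphere (0 : Fin q → ℝ) 1 := by simpa using hunorm
    have h1 : y₀ ⬝ᵥ A.mulVec y₀ ≤ u ⬝ᵥ A.mulVec u := hmin humem
    have h2 : u ⬝ᵥ A.mulVec u = (‖y‖⁻¹) ^ 2 * (y ⬝ᵥ A.mulVec y) := Q_smul A _ y
    rw [h2] at h1
    have := mul_le_mul_of_nonneg_left h1 (le_of_lt (by positivity : (0:ℝ) < ‖y‖ ^ 2))
    calc (y₀ ⬝ᵥ A.mulVec y₀) * ‖y‖ ^ 2 = ‖y‖ ^ 2 * (y₀ ⬝ᵥ A.mulVec y₀) := by ring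
      _ ≤ ‖y‖ ^ 2 * ((‖y‖⁻¹) ^ 2 * (y ⬝ᵥ A.mulVec y)) := this
      _ = y ⬝ᵥ A.mulVec y := by
          field_simp

lemma young_aux (k δ E : ℝ) (hk : 1 ≤ k) (hδ : 0 < δ) (hE : 0 < E) :
    ∃ B > 0, ∀ t : ℝ, 0 ≤ t → E * t ^ (k - 1) ≤ B + δ * t ^ k := by
  set M : ℝ := max 1 (E / δ) with hM
  have hM1 : 1 ≤ M := le_max_left _ _
  have hM0 : 0 < M := lt_of_lt_of_le one_pos hM1
  refine ⟨E * M ^ (k - 1), by positivity, fun t ht => ?_⟩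
  rcases le_or_gt t M with hle | hlt
  · have h1 : t ^ (k - 1) ≤ M ^ (k - 1) :=
      Real.rpow_le_rpow ht hle (by linarith)
    have h2 : (0:ℝ) ≤ δ * t ^ k := by positivity
    nlinarith [Real.rpow_nonneg ht (k - 1)]
  · have ht1 : (1:ℝ) ≤ t := le_trans hM1 hlt.le
    have ht0 : (0:ℝ) < t := lt_of_lt_of_le one_pos ht1
    have hEt : E ≤ δ * t := by
      have : E / δ ≤ t := le_trans (le_max_right _ _) hlt.le
      calc E = δ * (E / δ) := by field_simp
        _ ≤ δ * t := by nlinarith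
    have hsplit : t ^ k = t ^ (k - 1) * t := by
      rw [← Real.rpow_add_one ht0.ne' (k - 1)]; ring_nf
    have h3 : E * t ^ (k - 1) ≤ δ * t ^ k := by
      rw [hsplit]
      have h4 := Real.rpow_nonneg ht (k - 1)
      nlinarith
    have : (0:ℝ) < E * M ^ (k - 1) := by positivity
    linarith


set_option maxHeartbeats 1000000

/-- Lyapunov drift estimate for 𝒱_k(y) = ⟨y, A y⟩^k under the frozen generator
𝔏^z[f](y) = Tr(η ηᵀ D²f)(y) + h(z,y)·∇f(y). -/
theorem stmt0 (p q : ℕ)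
    (A : Matrix (Fin q) (Fin q) ℝ) (hAsymm : A.IsSymm) (hApos : A.PosDef)
    (h : (Fin p → ℝ) → (Fin q → ℝ) → (Fin q → ℝ))
    (η : (Fin p → ℝ) → (Fin q → ℝ) → Matrix (Fin q) (Fin q) ℝ)
    (Cη : ℝ) (hη : ∀ z y i j, |η z y i j| ≤ Cη)
    (δ₀ δ₁ : ℝ) (hδ₀ : 0 < δ₀) (hδ₁ : 0 < δ₁)
    (hdrift : ∀ z y, h z y ⬝ᵥ A.mulVec y ≤ δ₀ - δ₁ * (y ⬝ᵥ A.mulVec y))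
    (L : (Fin p → ℝ) → ((Fin q → ℝ) → ℝ) → (Fin q → ℝ) → ℝ)
    (hL : ∀ z f y, L z f y =
      (∑ i, ∑ j, (η z y * (η z y).transpose) i j *
        fderiv ℝ (fun y' => fderiv ℝ f y' (Pi.single j 1)) y (Pi.single i 1))
      + ∑ i, h z y i * fderiv ℝ f y (Pi.single i 1)) :
    ∀ k : ℝ, 1 ≤ k → ∃ β₀ β₁ : ℝ, 0 < β₀ ∧ 0 < β₁ ∧
      ∀ z y, L z (fun y' => (y' ⬝ᵥ A.mulVec y') ^ k) y ≤
        β₀ - β₁ * (y ⬝ᵥ A.mulVec y) ^ k := by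
  intro k hk
  have hk0 : (0:ℝ) < k := lt_of_lt_of_le one_pos hk
  have hk1 : (0:ℝ) ≤ k - 1 := by linarith
  set CA : ℝ := (∑ i, ∑ j, |A i j|) + 1 with hCAdef
  have hCA : 0 < CA := by positivity
  have hAentry : ∀ i j, |A i j| ≤ CA := by
    intro i j
    have h1 : |A i j| ≤ ∑ j', |A i j'| :=
      Finset.single_le_sum (f := fun j' => |A i j'|)
        (fun _ _ => abs_nonneg _) (Finset.mem_univ j)
    have h2 : (∑ j', |A i j'|) ≤ ∑ i', ∑ j', |A i' j'| :=
      Finset.single_le_sum (f := fun i' => ∑ j', |A i' j'|)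
        (fun _ _ => Finset.sum_nonneg fun _ _ => abs_nonneg _) (Finset.mem_univ i)
    rw [hCAdef]; linarith
  have hAv : ∀ (y : Fin q → ℝ) (j : Fin q), |A.mulVec y j| ≤ CA * ‖y‖ := by
    intro y j
    have he : A.mulVec y j = ∑ i, A j i * y i := rfl
    rw [he]
    calc |∑ i, A j i * y i| ≤ ∑ i, |A j i * y i| := Finset.abs_sum_le_sum_abs _ _
      _ ≤ ∑ i, |A j i| * ‖y‖ := by
          refine Finset.sum_le_sum fun i _ => ?_
          rw [abs_mul]
          exact mul_le_mul_of_nonneg_left (norm_le_pi_norm y i) (abs_nonneg _)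
      _ = (∑ i, |A j i|) * ‖y‖ := by rw [Finset.sum_mul]
      _ ≤ CA * ‖y‖ := by
          refine mul_le_mul_of_nonneg_right ?_ (norm_nonneg _)
          have h2 : (∑ i, |A j i|) ≤ ∑ i', ∑ j', |A i' j'| :=
            Finset.single_le_sum (f := fun i' => ∑ j', |A i' j'|)
              (fun _ _ => Finset.sum_nonneg fun _ _ => abs_nonneg _) (Finset.mem_univ j)
          rw [hCAdef]; linarith
  obtain ⟨m, hm, hmQ⟩ := posdef_lower A hApos
  set Cq : ℝ := max Cη 0 with hCqdef
  have hCq : 0 ≤ Cq := le_max_right _ _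
  have hηb : ∀ z y i j, |η z y i j| ≤ Cq := fun z y i j => (hη z y i j).trans (le_max_left _ _)
  have hηη : ∀ z y i j, |(η z y * (η z y).transpose) i j| ≤ (q:ℝ) * Cq ^ 2 := by
    intro z y i j
    rw [Matrix.mul_apply]
    calc |∑ l, η z y i l * (η z y).transpose l j| ≤ ∑ l, |η z y i l * (η z y).transpose l j| :=
          Finset.abs_sum_le_sum_abs _ _
      _ ≤ ∑ _l : Fin q, Cq ^ 2 := by
          refine Finset.sum_le_sum fun l _ => ?_
          rw [abs_mul, Matrix.transpose_apply, sq]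
          exact mul_le_mul (hηb z y i l) (hηb z y j l) (abs_nonneg _) hCq
      _ = (q:ℝ) * Cq ^ 2 := by simp [Finset.sum_const, mul_comm]
  set C₂ : ℝ := 2 * k * CA + 4 * k * (k - 1) * CA ^ 2 / m with hC₂def
  have hC₂ : 0 < C₂ := by
    have h1 : 0 < 2 * k * CA := by positivity
    have h3 : 0 ≤ (k - 1) * CA ^ 2 := mul_nonneg hk1 (sq_nonneg _)
    have h2 : 0 ≤ 4 * k * (k - 1) * CA ^ 2 / m := by
      apply div_nonneg _ hm.le
      have h4 : 0 ≤ k * ((k - 1) * CA ^ 2) := mul_nonneg hk0.le h3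
      nlinarith
    rw [hC₂def]; linarith
  -- second-derivative entry bound away from 0
  have key : ∀ (y : Fin q → ℝ), y ≠ 0 → ∀ i j,
      |fderiv ℝ (fun y' => fderiv ℝ (fun y'' => (y'' ⬝ᵥ A.mulVec y'') ^ k) y' (Pi.single j 1)) y
        (Pi.single i 1)| ≤ C₂ * (y ⬝ᵥ A.mulVec y) ^ (k - 1) := by
    intro y hy i j
    have hQy : 0 < y ⬝ᵥ A.mulVec y := by simpa using hApos.dotProduct_mulVec_pos hy
    set Qy := y ⬝ᵥ A.mulVec y with hQydef
    have ha : 0 ≤ Qy ^ (k - 1) := Real.rpow_nonneg hQy.le _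
    have hb : 0 ≤ Qy ^ (k - 2) := Real.rpow_nonneg hQy.le _
    have hba : Qy ^ (k - 2) * Qy = Qy ^ (k - 1) := by
      rw [← Real.rpow_add_one hQy.ne' (k - 2)]
      congr 1; ring
    have hn2 : ‖y‖ ^ 2 ≤ Qy / m := by
      rw [le_div_iff₀ hm]; have := hmQ y; linarith
    rw [fderiv2_single A k hk hAsymm y hQy.ne' i j]
    have hT1 : |k * Qy ^ (k - 1) * (2 * A j i)| ≤ 2 * k * CA * Qy ^ (k - 1) := by
      simp only [abs_mul]
      rw [abs_of_nonneg hk0.le, abs_of_nonneg ha, abs_two]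
      calc k * Qy ^ (k-1) * (2 * |A j i|) ≤ k * Qy ^ (k-1) * (2 * CA) := by
            refine mul_le_mul_of_nonneg_left ?_ (by positivity)
            linarith [hAentry j i]
        _ = 2 * k * CA * Qy ^ (k-1) := by ring
    have hT2 : |(2 * A.mulVec y j) * (k * ((k - 1) * Qy ^ (k - 2) * (2 * A.mulVec y i)))|
        ≤ 4 * k * (k - 1) * CA ^ 2 / m * Qy ^ (k - 1) := by
      have e1 : |(2 * A.mulVec y j) * (k * ((k - 1) * Qy ^ (k - 2) * (2 * A.mulVec y i)))|
          = 4 * k * (k - 1) * Qy ^ (k - 2) * (|A.mulVec y j| * |A.mulVec y i|) := by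
        simp only [abs_mul]
        rw [abs_two, abs_of_nonneg hk0.le, abs_of_nonneg hk1, abs_of_nonneg hb]
        ring
      rw [e1]
      have e2 : |A.mulVec y j| * |A.mulVec y i| ≤ CA ^ 2 * ‖y‖ ^ 2 := by
        have h5 := mul_le_mul (hAv y j) (hAv y i) (abs_nonneg _) (by positivity)
        calc |A.mulVec y j| * |A.mulVec y i| ≤ CA * ‖y‖ * (CA * ‖y‖) := h5
          _ = CA ^ 2 * ‖y‖ ^ 2 := by ring
      calc 4 * k * (k - 1) * Qy ^ (k - 2) * (|A.mulVec y j| * |A.mulVec y i|)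
          ≤ 4 * k * (k - 1) * Qy ^ (k - 2) * (CA ^ 2 * ‖y‖ ^ 2) := by
            refine mul_le_mul_of_nonneg_left e2 ?_
            have h3 : 0 ≤ (k - 1) * Qy ^ (k - 2) := mul_nonneg hk1 hb
            nlinarith
        _ ≤ 4 * k * (k - 1) * Qy ^ (k - 2) * (CA ^ 2 * (Qy / m)) := by
            refine mul_le_mul_of_nonneg_left ?_ ?_
            · exact mul_le_mul_of_nonneg_left hn2 (by positivity)
            · have h3 : 0 ≤ (k - 1) * Qy ^ (k - 2) := mul_nonneg hk1 hb
              nlinarith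
        _ = 4 * k * (k - 1) * CA ^ 2 / m * (Qy ^ (k - 2) * Qy) := by
            field_simp
        _ = 4 * k * (k - 1) * CA ^ 2 / m * Qy ^ (k - 1) := by rw [hba]
    calc |k * Qy ^ (k - 1) * (2 * A j i)
          + (2 * A.mulVec y j) * (k * ((k - 1) * Qy ^ (k - 2) * (2 * A.mulVec y i)))|
        ≤ |k * Qy ^ (k - 1) * (2 * A j i)|
          + |(2 * A.mulVec y j) * (k * ((k - 1) * Qy ^ (k - 2) * (2 * A.mulVec y i)))| :=
          abs_add_le _ _
      _ ≤ 2 * k * CA * Qy ^ (k - 1) + 4 * k * (k - 1) * CA ^ 2 / m * Qy ^ (k - 1) :=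
          add_le_add hT1 hT2
      _ = C₂ * Qy ^ (k - 1) := by rw [hC₂def]; ring
  -- constants for the final bound
  set C₃ : ℝ := (q:ℝ) * (q:ℝ) * ((q:ℝ) * Cq ^ 2 * (C₂)) with hC₃def
  have hC₃ : 0 ≤ C₃ := by positivity
  set E : ℝ := C₃ + 2 * k * δ₀ + 1 with hEdef
  have hE : 0 < E := by positivity
  obtain ⟨B, hB, hBbound⟩ := young_aux k (k * δ₁) E hk (by positivity) hE
  set C₀ : ℝ := ∑ i : Fin q, ∑ j : Fin q, ((q:ℝ) * Cq ^ 2) *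
    |fderiv ℝ (fun y' => fderiv ℝ (fun y'' => (y'' ⬝ᵥ A.mulVec y'') ^ k) y' (Pi.single j 1)) 0
      (Pi.single i 1)| with hC₀def
  have hC₀ : 0 ≤ C₀ := Finset.sum_nonneg fun i _ => Finset.sum_nonneg fun j _ => by positivity
  refine ⟨B + C₀, k * δ₁, by linarith, by positivity, fun z y => ?_⟩
  rw [hL]
  have hdterm : ∑ i, h z y i * fderiv ℝ (fun y'' => (y'' ⬝ᵥ A.mulVec y'') ^ k) y (Pi.single i 1)
      = 2 * k * (y ⬝ᵥ A.mulVec y) ^ (k - 1) * (h z y ⬝ᵥ A.mulVec y) := by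
    simp_rw [fderiv_V_single A k hk hAsymm y]
    calc ∑ i, h z y i * (k * (y ⬝ᵥ A.mulVec y) ^ (k - 1) * (2 * A.mulVec y i))
        = ∑ i, (2 * k * (y ⬝ᵥ A.mulVec y) ^ (k - 1)) * (h z y i * A.mulVec y i) :=
          Finset.sum_congr rfl fun i _ => by ring
      _ = 2 * k * (y ⬝ᵥ A.mulVec y) ^ (k - 1) * ∑ i, h z y i * A.mulVec y i :=
          (Finset.mul_sum _ _ _).symm
      _ = 2 * k * (y ⬝ᵥ A.mulVec y) ^ (k - 1) * (h z y ⬝ᵥ A.mulVec y) := rfl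
  rcases eq_or_ne y 0 with rfl | hy
  -- case y = 0
  · have hQ00 : (0 : Fin q → ℝ) ⬝ᵥ A.mulVec 0 = 0 := by simp
    have hdz : (2:ℝ) * k * ((0 : Fin q → ℝ) ⬝ᵥ A.mulVec 0) ^ (k - 1)
        * (h z 0 ⬝ᵥ A.mulVec 0) = 0 := by simp
    rw [hdterm, hdz, add_zero, hQ00, Real.zero_rpow hk0.ne']
    have htr : ∑ i, ∑ j, (η z 0 * (η z 0).transpose) i j *
        fderiv ℝ (fun y' => fderiv ℝ (fun y'' => (y'' ⬝ᵥ A.mulVec y'') ^ k) y' (Pi.single j 1)) 0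
          (Pi.single i 1) ≤ C₀ := by
      rw [hC₀def]
      refine Finset.sum_le_sum fun i _ => Finset.sum_le_sum fun j _ => ?_
      set w := fderiv ℝ (fun y' => fderiv ℝ (fun y'' => (y'' ⬝ᵥ A.mulVec y'') ^ k) y'
        (Pi.single j 1)) 0 (Pi.single i 1)
      calc (η z 0 * (η z 0).transpose) i j * w ≤ |(η z 0 * (η z 0).transpose) i j * w| :=
            le_abs_self _
        _ = |(η z 0 * (η z 0).transpose) i j| * |w| := abs_mul _ _
        _ ≤ ((q:ℝ) * Cq ^ 2) * |w| :=
            mul_le_mul_of_nonneg_right (hηη z 0 i j) (abs_nonneg _)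
    have : k * δ₁ * (0:ℝ) = 0 := by ring
    rw [this]
    linarith
  -- case y ≠ 0
  · have hQy : 0 < y ⬝ᵥ A.mulVec y := by simpa using hApos.dotProduct_mulVec_pos hy
    set Qy := y ⬝ᵥ A.mulVec y with hQydef
    have ha : 0 ≤ Qy ^ (k - 1) := Real.rpow_nonneg hQy.le _
    have hak : Qy ^ (k - 1) * Qy = Qy ^ k := by
      rw [← Real.rpow_add_one hQy.ne' (k - 1)]
      congr 1; ring
    have htr : ∑ i, ∑ j, (η z y * (η z y).transpose) i j *
        fderiv ℝ (fun y' => fderiv ℝ (fun y'' => (y'' ⬝ᵥ A.mulVec y'') ^ k) y' (Pi.single j 1)) y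
          (Pi.single i 1) ≤ C₃ * Qy ^ (k - 1) := by
      calc ∑ i, ∑ j, (η z y * (η z y).transpose) i j *
            fderiv ℝ (fun y' => fderiv ℝ (fun y'' => (y'' ⬝ᵥ A.mulVec y'') ^ k) y' (Pi.single j 1))
              y (Pi.single i 1)
          ≤ ∑ _i : Fin q, ∑ _j : Fin q, ((q:ℝ) * Cq ^ 2) * (C₂ * Qy ^ (k - 1)) := by
            refine Finset.sum_le_sum fun i _ => Finset.sum_le_sum fun j _ => ?_
            set w := fderiv ℝ (fun y' => fderiv ℝ (fun y'' => (y'' ⬝ᵥ A.mulVec y'') ^ k) y'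
              (Pi.single j 1)) y (Pi.single i 1) with hwdef
            calc (η z y * (η z y).transpose) i j * w ≤ |(η z y * (η z y).transpose) i j * w| :=
                  le_abs_self _
              _ = |(η z y * (η z y).transpose) i j| * |w| := abs_mul _ _
              _ ≤ ((q:ℝ) * Cq ^ 2) * (C₂ * Qy ^ (k - 1)) :=
                  mul_le_mul (hηη z y i j) (key y hy i j) (abs_nonneg _) (by positivity)
        _ = C₃ * Qy ^ (k - 1) := by
            rw [hC₃def]; simp [Finset.sum_const]; ring
    have hdr : 2 * k * Qy ^ (k - 1) * (h z y ⬝ᵥ A.mulVec y)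
        ≤ 2 * k * δ₀ * Qy ^ (k - 1) - 2 * k * δ₁ * Qy ^ k := by
      have h1 : h z y ⬝ᵥ A.mulVec y ≤ δ₀ - δ₁ * Qy := hdrift z y
      have h2 : 2 * k * Qy ^ (k - 1) * (h z y ⬝ᵥ A.mulVec y)
          ≤ 2 * k * Qy ^ (k - 1) * (δ₀ - δ₁ * Qy) :=
        mul_le_mul_of_nonneg_left h1 (by positivity)
      calc 2 * k * Qy ^ (k - 1) * (h z y ⬝ᵥ A.mulVec y)
          ≤ 2 * k * Qy ^ (k - 1) * (δ₀ - δ₁ * Qy) := h2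
        _ = 2 * k * δ₀ * Qy ^ (k - 1) - 2 * k * δ₁ * (Qy ^ (k - 1) * Qy) := by ring
        _ = 2 * k * δ₀ * Qy ^ (k - 1) - 2 * k * δ₁ * Qy ^ k := by rw [hak]
    have hEbound : E * Qy ^ (k - 1) ≤ B + (k * δ₁) * Qy ^ k := hBbound Qy hQy.le
    have hCE : (C₃ + 2 * k * δ₀) * Qy ^ (k - 1) ≤ E * Qy ^ (k - 1) := by
      refine mul_le_mul_of_nonneg_right ?_ ha
      rw [hEdef]; linarith
    rw [hdterm]
    calc (∑ i, ∑ j, (η z y * (η z y).transpose) i j *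
            fderiv ℝ (fun y' => fderiv ℝ (fun y'' => (y'' ⬝ᵥ A.mulVec y'') ^ k) y' (Pi.single j 1))
              y (Pi.single i 1))
          + 2 * k * Qy ^ (k - 1) * (h z y ⬝ᵥ A.mulVec y)
        ≤ C₃ * Qy ^ (k - 1) + (2 * k * δ₀ * Qy ^ (k - 1) - 2 * k * δ₁ * Qy ^ k) :=
          add_le_add htr hdr
      _ = (C₃ + 2 * k * δ₀) * Qy ^ (k - 1) - 2 * k * δ₁ * Qy ^ k := by ring
      _ ≤ E * Qy ^ (k - 1) - 2 * k * δ₁ * Qy ^ k := by linarith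
      _ ≤ (B + (k * δ₁) * Qy ^ k) - 2 * k * δ₁ * Qy ^ k := by linarith
      _ = B - k * δ₁ * Qy ^ k := by ring
      _ ≤ B + C₀ - k * δ₁ * Qy ^ k := by linarith
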